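/- arXiv:1807.05937 — 2 statements merged into one kernel-verified Lean document; each statement's English description precedes it below -/
import Mathlib

section
/- Let μ ∈ (0, 1), α ∈ ℝ, β > 0 and N₀ > 0, and define N_μ(t) = N₀·E_μ((α/β^μ)·(1 − exp(−β·t))^μ) for t ≥ 0. Then N_μ(0) = N₀, N_μ is differentiable on (0, ∞), and for every t > 0 it satisfies the fractional Gompertz equation (1/Γ(1−μ))·∫_0^t ((exp(−β·τ) − exp(−β·t))/β)^{−μ}·N_μ'(τ) dτ = α·N_μ(t). -/
open MeasureTheory Set

/-- The Mittag-Leffler function of parameter `μ > 0`: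
`E_μ(x) = ∑' k, x^k / Γ(μ·k + 1)`. -/
noncomputable def mittagLeffler (μ x : ℝ) : ℝ := ∑' k : ℕ, x ^ k / Real.Gamma (μ * k + 1)

namespace GompertzAux

/-- Lower bound for the Gamma function: `Γ(p+1) ≥ s^p e^{-(s+1)}` for `s ≥ 1`, `p ≥ 0`. -/
lemma gamma_lower {s p : ℝ} (hs : 1 ≤ s) (hp : 0 ≤ p) :
    s ^ p * Real.exp (-(s + 1)) ≤ Real.Gamma (p + 1) := by
  have hs0 : (0:ℝ) < s := lt_of_lt_of_le one_pos hs
  rw [Real.Gamma_eq_integral (by positivity : (0:ℝ) < p + 1)]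
  have hint : IntegrableOn (fun x : ℝ => Real.exp (-x) * x ^ (p + 1 - 1)) (Ioi 0) :=
    Real.GammaIntegral_convergent (by positivity)
  have hsub : Ioc s (s + 1) ⊆ Ioi (0:ℝ) := fun x hx => lt_of_lt_of_le hs0 hx.1.le
  have step1 : ∫ x in Ioc s (s+1), Real.exp (-x) * x ^ (p + 1 - 1)
      ≤ ∫ x in Ioi 0, Real.exp (-x) * x ^ (p + 1 - 1) := by
    apply setIntegral_mono_set hint
    · filter_upwards [ae_restrict_mem measurableSet_Ioi] with x hx
      have : (0:ℝ) < x := hx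
      positivity
    · exact hsub.eventuallyLE
  refine le_trans ?_ step1
  have step2 : (Real.exp (-(s+1)) * s ^ p) * (volume (Ioc s (s+1))).toReal
      ≤ ∫ x in Ioc s (s+1), Real.exp (-x) * x ^ (p + 1 - 1) := by
    apply setIntegral_ge_of_const_le_real measurableSet_Ioc
    · simp [Real.volume_Ioc]
    · intro x hx
      have hx1 : s ≤ x := hx.1.le
      have hx0 : (0:ℝ) < x := lt_of_lt_of_le hs0 hx.1.le
      have h1 : Real.exp (-(s+1)) ≤ Real.exp (-x) := Real.exp_le_exp.2 (by linarith [hx.2])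
      have h2 : s ^ p ≤ x ^ (p + 1 - 1) := by
        rw [show p + 1 - 1 = p by ring]
        exact Real.rpow_le_rpow hs0.le hx1 hp
      have := mul_le_mul h1 h2 (by positivity) (Real.exp_pos _).le
      linarith
    · exact hint.mono_set hsub
  have hvol : (volume (Ioc s (s+1))).toReal = 1 := by simp [Real.volume_Ioc]
  rw [hvol, mul_one] at step2
  linarith

/-- Summability of the Mittag-Leffler-type series. -/
lemma summable_ml {m : ℝ} (hm : 0 < m) {r : ℝ} (hr : 0 ≤ r) :
    Summable (fun k : ℕ => r ^ k / Real.Gamma (m * k + 1)) := by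
  set s : ℝ := max 1 ((2*r) ^ (1/m)) with hs_def
  have hs1 : (1:ℝ) ≤ s := le_max_left _ _
  have hs0 : (0:ℝ) < s := lt_of_lt_of_le one_pos hs1
  have hsm : 2 * r ≤ s ^ m := by
    calc 2 * r = ((2*r) ^ (1/m)) ^ m := by
          rw [← Real.rpow_mul (by linarith : (0:ℝ) ≤ 2*r), one_div,
            inv_mul_cancel₀ hm.ne', Real.rpow_one]
      _ ≤ s ^ m := Real.rpow_le_rpow (Real.rpow_nonneg (by linarith) _) (le_max_right _ _) hm.le
  have hsm1 : (1:ℝ) ≤ s ^ m := Real.one_le_rpow hs1 hm.le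
  apply Summable.of_nonneg_of_le (fun k => by positivity)
    (f := fun k : ℕ => Real.exp (s+1) * (1/2 : ℝ)^k)
  · intro k
    have hΓ : s ^ (m * k) * Real.exp (-(s+1)) ≤ Real.Gamma (m * k + 1) :=
      gamma_lower hs1 (by positivity)
    have hΓ0 : (0:ℝ) < s ^ (m * k) * Real.exp (-(s+1)) := by positivity
    have h1 : r ^ k / Real.Gamma (m * k + 1) ≤ r ^ k / (s ^ (m * (k:ℝ)) * Real.exp (-(s+1))) := by
      gcongr
    refine h1.trans ?_
    have hsplit : s ^ (m * (k:ℝ)) = (s ^ m) ^ k := by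
      rw [Real.rpow_mul hs0.le, Real.rpow_natCast]
    rw [hsplit, Real.exp_neg]
    have hpow : r ^ k / (s ^ m) ^ k ≤ (1/2 : ℝ) ^ k := by
      rw [← div_pow]
      apply pow_le_pow_left₀ (by positivity)
      rw [div_le_div_iff₀ (by positivity) (by norm_num)]
      linarith
    calc r ^ k / ((s ^ m) ^ k * (Real.exp (s+1))⁻¹)
        = (r ^ k / (s ^ m) ^ k) * Real.exp (s+1) := by
          field_simp
      _ ≤ (1/2:ℝ) ^ k * Real.exp (s+1) := by
          exact mul_le_mul_of_nonneg_right hpow (Real.exp_pos _).le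
      _ = Real.exp (s+1) * (1/2:ℝ)^k := by ring
  · exact (summable_geometric_of_lt_one (by norm_num) (by norm_num)).mul_left _

/-- Summability with an extra factor of `k`. -/
lemma summable_ml' {m : ℝ} (hm : 0 < m) {r : ℝ} (hr : 0 ≤ r) :
    Summable (fun k : ℕ => (k:ℝ) * r ^ k / Real.Gamma (m * k + 1)) := by
  apply Summable.of_nonneg_of_le (fun k => by positivity)
    (f := fun k : ℕ => (2*r) ^ k / Real.Gamma (m * k + 1)) _ (summable_ml hm (by linarith))
  intro k
  have hΓ : 0 < Real.Gamma (m * k + 1) := Real.Gamma_pos_of_pos (by positivity)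
  have hk : (k:ℝ) * r ^ k ≤ (2*r)^k := by
    rw [mul_pow]
    have h2 : (k:ℝ) ≤ 2^k := by exact_mod_cast (Nat.lt_two_pow_self (n := k)).le
    exact mul_le_mul_of_nonneg_right h2 (pow_nonneg hr k)
  exact div_le_div_of_nonneg_right hk hΓ.le


/-- The real Beta integral: integrability. -/
lemma betaReal_integrable {p q Y : ℝ} (hp : 0 < p) (hq : 0 < q) (hY : 0 < Y) :
    IntegrableOn (fun u : ℝ => u ^ (p-1) * (Y-u) ^ (q-1)) (Ioo 0 Y) volume := by
  rw [← intervalIntegrable_iff_integrableOn_Ioo_of_le hY.le]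
  have h1 : IntervalIntegrable (fun u : ℝ => u ^ (p-1) * (Y-u) ^ (q-1)) volume 0 (Y/2) := by
    apply (intervalIntegral.intervalIntegrable_rpow' (by linarith)).mul_continuousOn
    apply ContinuousOn.rpow_const (continuous_const.sub continuous_id).continuousOn
    intro x hx
    rw [uIcc_of_le (by linarith)] at hx
    exact Or.inl (by simp only [Pi.sub_apply, id_eq]; exact (sub_pos.2 (by linarith [hx.2])).ne')
  have h2 : IntervalIntegrable (fun u : ℝ => u ^ (p-1) * (Y-u) ^ (q-1)) volume (Y/2) Y := by
    have hbase : IntervalIntegrable (fun u : ℝ => (Y-u) ^ (q-1)) volume (Y/2) Y := by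
      have := (intervalIntegral.intervalIntegrable_rpow'
        (by linarith : (-1:ℝ) < q - 1) (a := 0) (b := Y/2)).comp_sub_left Y
      simpa [sub_half] using this.symm
    apply hbase.continuousOn_mul
    apply ContinuousOn.rpow_const continuousOn_id
    intro x hx
    rw [uIcc_of_le (by linarith)] at hx
    exact Or.inl (by simp only [id_eq]; intro h; rw [h] at hx; linarith [hx.1])
  exact h1.trans h2

/-- The real Beta integral: value. -/
lemma betaReal_value {p q Y : ℝ} (hp : 0 < p) (hq : 0 < q) (hY : 0 < Y) :
    ∫ u in Ioo 0 Y, u ^ (p-1) * (Y-u) ^ (q-1)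
      = Y ^ (p+q-1) * (Real.Gamma p * Real.Gamma q / Real.Gamma (p+q)) := by
  have hGpq : Real.Gamma (p+q) ≠ 0 := (Real.Gamma_pos_of_pos (by positivity)).ne'
  have hIoo : ∫ u in Ioo 0 Y, u ^ (p-1) * (Y-u) ^ (q-1)
      = ∫ u in (0:ℝ)..Y, u ^ (p-1) * (Y-u) ^ (q-1) := by
    rw [intervalIntegral.integral_of_le hY.le, MeasureTheory.integral_Ioc_eq_integral_Ioo]
  have hcast : ∫ x in (0:ℝ)..Y, (x:ℂ) ^ ((p:ℂ)-1) * ((Y:ℂ) - x) ^ ((q:ℂ)-1)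
      = ((∫ u in (0:ℝ)..Y, u ^ (p-1) * (Y-u) ^ (q-1) : ℝ) : ℂ) := by
    rw [← intervalIntegral.integral_ofReal]
    apply intervalIntegral.integral_congr
    intro x hx
    rw [uIcc_of_le hY.le] at hx
    have h1 : ((x ^ (p-1) : ℝ) : ℂ) = (x:ℂ) ^ ((p:ℂ)-1) := by
      rw [Complex.ofReal_cpow hx.1]; push_cast; ring_nf
    have h2 : (((Y-x) ^ (q-1) : ℝ) : ℂ) = ((Y:ℂ)-x) ^ ((q:ℂ)-1) := by
      rw [Complex.ofReal_cpow (by linarith [hx.2] : (0:ℝ) ≤ Y - x)]; push_cast; ring_nf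
    simp only [Complex.ofReal_mul, h1, h2]
  have hC := Complex.betaIntegral_scaled (p:ℂ) (q:ℂ) hY
  have hG := Complex.Gamma_mul_Gamma_eq_betaIntegral
      (show 0 < (p:ℂ).re by simpa using hp) (show 0 < (q:ℂ).re by simpa using hq)
  have hYc : ((Y ^ (p+q-1) : ℝ) : ℂ) = (Y:ℂ) ^ ((p:ℂ)+(q:ℂ)-1) := by
    rw [Complex.ofReal_cpow hY.le]; push_cast; ring_nf
  have key : ((∫ u in (0:ℝ)..Y, u ^ (p-1) * (Y-u) ^ (q-1)) * Real.Gamma (p+q) : ℝ)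
      = (Y ^ (p+q-1) * (Real.Gamma p * Real.Gamma q) : ℝ) := by
    have : (((∫ u in (0:ℝ)..Y, u ^ (p-1) * (Y-u) ^ (q-1)) * Real.Gamma (p+q) : ℝ) : ℂ)
        = ((Y ^ (p+q-1) * (Real.Gamma p * Real.Gamma q) : ℝ) : ℂ) := by
      push_cast
      rw [← hcast, hC, ← Complex.Gamma_ofReal, ← Complex.Gamma_ofReal, ← Complex.Gamma_ofReal,
        hYc]
      push_cast
      linear_combination (-(Y:ℂ) ^ ((p:ℂ) + (q:ℂ) - 1)) * hG
    exact_mod_cast this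
  rw [hIoo]
  field_simp at key ⊢
  linarith [key]


/-- Term-by-term derivative of the Mittag-Leffler-type series. -/
lemma hasDerivAt_ml_series {m c : ℝ} (hm : 0 < m) {x : ℝ} (hx : 0 < x) :
    HasDerivAt (fun z : ℝ => ∑' k : ℕ, c ^ k * z ^ (m * k) / Real.Gamma (m * k + 1))
      (∑' k : ℕ, c ^ k * (m * k) * x ^ (m * k - 1) / Real.Gamma (m * k + 1)) x := by
  set a := x / 2 with ha_def
  set b := x + 1 with hb_def
  have ha : 0 < a := by positivity
  have hb : 0 < b := by positivity
  have hΓ : ∀ k : ℕ, 0 < Real.Gamma (m * k + 1) := fun k =>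
    Real.Gamma_pos_of_pos (by positivity)
  refine hasDerivAt_tsum_of_isPreconnected
    (u := fun k : ℕ => m * a⁻¹ * ((k:ℝ) * (|c| * a ^ m) ^ k / Real.Gamma (m * k + 1))
      + m * b⁻¹ * ((k:ℝ) * (|c| * b ^ m) ^ k / Real.Gamma (m * k + 1)))
    (t := Ioo a b) (y₀ := x)
    (g := fun (k:ℕ) (z:ℝ) => c ^ k * z ^ (m * k) / Real.Gamma (m * k + 1))
    (g' := fun (k:ℕ) (z:ℝ) => c ^ k * (m * k) * z ^ (m * k - 1) / Real.Gamma (m * k + 1))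
    (((summable_ml' hm (by positivity)).mul_left _).add
      ((summable_ml' hm (by positivity)).mul_left _))
    isOpen_Ioo isPreconnected_Ioo (fun k z hz => ?_) (fun k z hz => ?_)
    ⟨half_lt_self hx, lt_add_one x⟩ ?_ ⟨half_lt_self hx, lt_add_one x⟩
  · -- HasDerivAt of each term
    have hz0 : (0:ℝ) < z := lt_trans ha hz.1
    have h := Real.hasDerivAt_rpow_const (x := z) (p := m * k) (Or.inl hz0.ne')
    have h2 := (h.const_mul (c ^ k)).div_const (Real.Gamma (m * k + 1))
    refine h2.congr_deriv ?_
    ring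
  · -- uniform bound on the derivatives
    have hz0 : (0:ℝ) < z := lt_trans ha hz.1
    have hnorm : ‖c ^ k * (m * k) * z ^ (m * (k:ℝ) - 1) / Real.Gamma (m * k + 1)‖
        = |c| ^ k * (m * k) * z ^ (m * (k:ℝ) - 1) / Real.Gamma (m * k + 1) := by
      rw [Real.norm_eq_abs, abs_div, abs_of_pos (hΓ k), abs_mul, abs_mul, abs_pow,
        abs_of_nonneg (by positivity : (0:ℝ) ≤ m * (k:ℝ)),
        abs_of_nonneg (Real.rpow_nonneg hz0.le _)]
    rw [hnorm]
    have hzb : z ^ (m * (k:ℝ) - 1) ≤ a ^ (m * (k:ℝ) - 1) + b ^ (m * (k:ℝ) - 1) := by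
      rcases le_or_gt 0 (m * (k:ℝ) - 1) with h | h
      · calc z ^ (m * (k:ℝ) - 1) ≤ b ^ (m * (k:ℝ) - 1) :=
              Real.rpow_le_rpow hz0.le hz.2.le h
          _ ≤ _ := le_add_of_nonneg_left (Real.rpow_nonneg ha.le _)
      · calc z ^ (m * (k:ℝ) - 1) ≤ a ^ (m * (k:ℝ) - 1) :=
              Real.rpow_le_rpow_of_nonpos ha hz.1.le h.le
          _ ≤ _ := le_add_of_nonneg_right (Real.rpow_nonneg hb.le _)
    have ea : a ^ (m * (k:ℝ) - 1) = a⁻¹ * (a ^ m) ^ k := by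
      rw [Real.rpow_sub ha, Real.rpow_one, Real.rpow_mul ha.le, Real.rpow_natCast]
      ring
    have eb : b ^ (m * (k:ℝ) - 1) = b⁻¹ * (b ^ m) ^ k := by
      rw [Real.rpow_sub hb, Real.rpow_one, Real.rpow_mul hb.le, Real.rpow_natCast]
      ring
    calc |c| ^ k * (m * k) * z ^ (m * (k:ℝ) - 1) / Real.Gamma (m * k + 1)
        ≤ |c| ^ k * (m * k) * (a ^ (m * (k:ℝ) - 1) + b ^ (m * (k:ℝ) - 1))
            / Real.Gamma (m * k + 1) := by gcongr
      _ = _ := by simp only [ea, eb, mul_pow]; field_simp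
  · -- summability at the point x
    apply Summable.of_abs
    apply Summable.of_nonneg_of_le (fun k => abs_nonneg _)
      (f := fun k : ℕ => (|c| * x ^ m) ^ k / Real.Gamma (m * k + 1))
      _ (summable_ml hm (by positivity))
    intro k
    apply le_of_eq
    rw [abs_div, abs_of_pos (hΓ k), abs_mul, abs_pow,
      abs_of_nonneg (Real.rpow_nonneg hx.le _)]
    simp only [mul_pow]
    rw [← Real.rpow_natCast (x ^ m) k, ← Real.rpow_mul hx.le]


lemma ml_eq {m c x : ℝ} (hx : 0 ≤ x) :
    mittagLeffler m (c * x ^ m) = ∑' k : ℕ, c ^ k * x ^ (m * k) / Real.Gamma (m * k + 1) := by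
  unfold mittagLeffler
  refine tsum_congr fun k => ?_
  rw [mul_pow, ← Real.rpow_natCast (x ^ m) k, ← Real.rpow_mul hx]

lemma ml_zero {m : ℝ} (hm : 0 < m) : mittagLeffler m 0 = 1 := by
  unfold mittagLeffler
  rw [tsum_eq_single 0 (fun k hk => by simp [zero_pow hk])]
  simp [Real.Gamma_one]

lemma y_strictMono {β : ℝ} (hβ : 0 < β) :
    StrictMono (fun τ : ℝ => 1 - Real.exp (-β * τ)) := by
  intro s t hst
  simp only
  have h1 : -β * t < -β * s := by nlinarith
  have h2 := Real.exp_lt_exp.2 h1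
  linarith

lemma y_image {β t : ℝ} (hβ : 0 < β) (ht : 0 < t) :
    (fun τ : ℝ => 1 - Real.exp (-β * τ)) '' Ioo 0 t
      = Ioo 0 (1 - Real.exp (-β * t)) := by
  have hmono := y_strictMono hβ
  have hy0 : (fun τ : ℝ => 1 - Real.exp (-β * τ)) 0 = 0 := by simp
  ext v
  constructor
  · rintro ⟨τ, ⟨h1, h2⟩, rfl⟩
    exact ⟨by simpa [hy0] using hmono h1, hmono h2⟩
  · rintro ⟨hv0, hv1⟩
    have hw0 : 0 < 1 - v := by
      have := Real.exp_pos (-β * t)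
      linarith
    have hval : 1 - Real.exp (-β * (-Real.log (1 - v) / β)) = v := by
      rw [show -β * (-Real.log (1 - v) / β) = Real.log (1 - v) by field_simp,
        Real.exp_log hw0]
      ring
    refine ⟨-Real.log (1 - v) / β, ⟨?_, ?_⟩, hval⟩
    · have h := hmono.lt_iff_lt (a := 0) (b := -Real.log (1 - v) / β)
      simp only [hval] at h
      apply h.1
      simpa using hv0
    · have h := hmono.lt_iff_lt (a := -Real.log (1 - v) / β) (b := t)
      simp only [hval] at h
      exact h.1 hv1

end GompertzAux

/-- **The generalized Gompertz law solves the fractional Gompertz equation.**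
Let `μ ∈ (0, 1)`, `α ∈ ℝ`, `β > 0` and `N₀ > 0`, and define
`N_μ(t) = N₀·E_μ((α/β^μ)·(1 − exp(−β·t))^μ)`. Then `N_μ(0) = N₀`, `N_μ` is
differentiable on `(0, ∞)`, and for every `t > 0` it satisfies
`(1/Γ(1−μ))·∫_0^t ((exp(−β·τ) − exp(−β·t))/β)^(−μ)·N_μ'(τ) dτ = α·N_μ(t)`. -/
theorem generalizedGompertz_solves_fractional_equation
    (μ α β N₀ : ℝ) (hμ : 0 < μ) (hμ1 : μ < 1) (hβ : 0 < β) (hN₀ : 0 < N₀)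
    (N : ℝ → ℝ)
    (hN : ∀ t : ℝ, N t = N₀ * mittagLeffler μ ((α / β ^ μ) * (1 - Real.exp (-β * t)) ^ μ)) :
    N 0 = N₀ ∧
    (∀ t > (0 : ℝ), DifferentiableAt ℝ N t) ∧
    (∀ t > (0 : ℝ),
      (1 / Real.Gamma (1 - μ)) *
          ∫ τ in Set.Ioo (0 : ℝ) t,
            ((Real.exp (-β * τ) - Real.exp (-β * t)) / β) ^ (-μ) * deriv N τ
        = α * N t) := by
  have hβμ : (0:ℝ) < β ^ μ := Real.rpow_pos_of_pos hβ μ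
  set c : ℝ := α / β ^ μ with hc_def
  have hΓ1μ : (0:ℝ) < Real.Gamma (1 - μ) := Real.Gamma_pos_of_pos (by linarith)
  have hΓ : ∀ k : ℕ, (0:ℝ) < Real.Gamma (μ * k + 1) := fun k =>
    Real.Gamma_pos_of_pos (by positivity)
  have hy_nonneg : ∀ {τ : ℝ}, 0 ≤ τ → 0 ≤ 1 - Real.exp (-β * τ) := by
    intro τ hτ
    have h1 : Real.exp (-β * τ) ≤ 1 := Real.exp_le_one_iff.2 (by nlinarith)
    linarith
  have hy_pos : ∀ {τ : ℝ}, 0 < τ → 0 < 1 - Real.exp (-β * τ) := by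
    intro τ hτ
    have h1 : Real.exp (-β * τ) < 1 := by
      rw [Real.exp_lt_one_iff]
      nlinarith
    linarith
  have hNF : ∀ τ : ℝ, 0 ≤ τ → N τ
      = N₀ * ∑' k : ℕ, c ^ k * (1 - Real.exp (-β * τ)) ^ (μ * k)
          / Real.Gamma (μ * k + 1) := by
    intro τ hτ
    rw [hN τ, GompertzAux.ml_eq (hy_nonneg hτ)]
  have hyD : ∀ τ : ℝ, HasDerivAt (fun s : ℝ => 1 - Real.exp (-β * s))
      (β * Real.exp (-β * τ)) τ := by
    intro τ
    have h1 : HasDerivAt (fun s : ℝ => -β * s) (-β) τ := by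
      simpa using (hasDerivAt_id τ).const_mul (-β)
    have h2 := (h1.exp).const_sub 1
    refine h2.congr_deriv ?_
    ring
  have hND : ∀ {τ : ℝ}, 0 < τ → HasDerivAt N
      (N₀ * ((∑' k : ℕ, c ^ k * (μ * k) * (1 - Real.exp (-β * τ)) ^ (μ * k - 1)
          / Real.Gamma (μ * k + 1)) * (β * Real.exp (-β * τ)))) τ := by
    intro τ hτ
    have hF := GompertzAux.hasDerivAt_ml_series (c := c) hμ (hy_pos hτ)
    have hcomp := (hF.comp τ (hyD τ)).const_mul N₀
    have heq : N =ᶠ[nhds τ] fun s => N₀ * ∑' k : ℕ,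
        c ^ k * (1 - Real.exp (-β * s)) ^ (μ * k) / Real.Gamma (μ * k + 1) := by
      filter_upwards [isOpen_Ioi.eventually_mem (show τ ∈ Ioi 0 from hτ)] with s hs
      exact hNF s (le_of_lt hs)
    exact hcomp.congr_of_eventuallyEq heq
  refine ⟨?_, fun t ht => (hND ht).differentiableAt, ?_⟩
  · rw [hN 0, show c * (1 - Real.exp (-β * 0)) ^ μ = 0 by
      simp [Real.zero_rpow hμ.ne'], GompertzAux.ml_zero hμ, mul_one]
  intro t ht
  have hY : (0:ℝ) < 1 - Real.exp (-β * t) := hy_pos ht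
  set Y : ℝ := 1 - Real.exp (-β * t) with hY_def
  set h : ℕ → ℝ → ℝ := fun k u =>
    (c ^ k * (μ * k) / Real.Gamma (μ * k + 1)) * (u ^ (μ * k - 1) * (Y - u) ^ (-μ))
    with hh_def
  have hbeta_int : ∀ p : ℝ, 0 < p →
      IntegrableOn (fun u : ℝ => u ^ (p - 1) * (Y - u) ^ (-μ)) (Ioo 0 Y) volume := by
    intro p hp
    have := GompertzAux.betaReal_integrable hp (by linarith : (0:ℝ) < 1 - μ) hY
    simpa [show (1:ℝ) - μ - 1 = -μ by ring] using this
  have hbeta_val : ∀ p : ℝ, 0 < p →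
      ∫ u in Ioo 0 Y, u ^ (p - 1) * (Y - u) ^ (-μ)
        = Y ^ (p + (1 - μ) - 1) * (Real.Gamma p * Real.Gamma (1 - μ)
            / Real.Gamma (p + (1 - μ))) := by
    intro p hp
    have := GompertzAux.betaReal_value hp (by linarith : (0:ℝ) < 1 - μ) hY
    simpa [show (1:ℝ) - μ - 1 = -μ by ring] using this
  have h_int : ∀ k : ℕ, IntegrableOn (h k) (Ioo 0 Y) volume := by
    intro k
    cases k with
    | zero =>
        have hz : h 0 = fun _ => 0 := by funext u; simp [hh_def]
        rw [hz]
        exact integrableOn_zero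
    | succ n =>
        have hp : (0:ℝ) < μ * ((n:ℝ)+1) := by positivity
        have H : IntegrableOn (fun u : ℝ => c ^ (n+1) * (μ * ((n:ℝ)+1))
            / Real.Gamma (μ * ((n:ℝ)+1) + 1) * (u ^ (μ * ((n:ℝ)+1) - 1) * (Y - u) ^ (-μ)))
            (Ioo 0 Y) volume :=
          (hbeta_int _ hp).const_mul _
        refine H.congr_fun (fun u _ => ?_) measurableSet_Ioo
        simp only [hh_def]
        push_cast
        ring
  have hml_shift : ∀ d : ℝ, 0 ≤ d →
      Summable (fun k : ℕ => d ^ k * Y ^ (μ * k) / Real.Gamma (μ * k + 1)) := by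
    intro d hd
    refine (GompertzAux.summable_ml hμ (r := d * Y ^ μ) (by positivity)).congr fun k => ?_
    rw [mul_pow, ← Real.rpow_natCast (Y ^ μ) k, ← Real.rpow_mul hY.le]
  have h_norm_val : ∀ k : ℕ, ∫ u in Ioo 0 Y, ‖h k u‖
      = (|c| ^ k * (μ * k) / Real.Gamma (μ * k + 1))
        * ∫ u in Ioo 0 Y, u ^ (μ * k - 1) * (Y - u) ^ (-μ) := by
    intro k
    rw [← MeasureTheory.integral_const_mul]
    refine setIntegral_congr_fun measurableSet_Ioo fun u hu => ?_
    have hu0 : 0 < u := hu.1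
    have hYu : 0 < Y - u := by linarith [hu.2]
    simp only [hh_def, Real.norm_eq_abs, abs_mul, abs_div, abs_pow,
      abs_of_pos (hΓ k), abs_of_nonneg (by positivity : (0:ℝ) ≤ μ * k),
      abs_of_nonneg (Real.rpow_nonneg hu0.le (μ * k - 1)),
      abs_of_nonneg (Real.rpow_nonneg hYu.le (-μ))]
  have hkey : ∀ (d : ℝ) (k : ℕ),
      (d ^ (k+1) * (μ * ((k:ℝ)+1)) / Real.Gamma (μ * ((k:ℝ)+1) + 1))
        * ∫ u in Ioo 0 Y, u ^ (μ * ((k:ℝ)+1) - 1) * (Y - u) ^ (-μ)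
      = Real.Gamma (1 - μ) * d * (d ^ k * Y ^ (μ * k) / Real.Gamma (μ * k + 1)) := by
    intro d k
    have hp : (0:ℝ) < μ * ((k:ℝ)+1) := by positivity
    rw [hbeta_val _ hp, show μ * ((k:ℝ)+1) + (1 - μ) - 1 = μ * k by ring,
      show μ * ((k:ℝ)+1) + (1 - μ) = μ * (k:ℝ) + 1 by ring,
      Real.Gamma_add_one hp.ne']
    have h1 : Real.Gamma (μ * ((k:ℝ)+1)) ≠ 0 := (Real.Gamma_pos_of_pos hp).ne'
    have h2 : Real.Gamma (μ * (k:ℝ) + 1) ≠ 0 := (hΓ k).ne'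
    field_simp
    ring
  have h_int_val : ∀ k : ℕ, ∫ u in Ioo 0 Y, h (k+1) u
      = Real.Gamma (1 - μ) * c * (c ^ k * Y ^ (μ * k) / Real.Gamma (μ * k + 1)) := by
    intro k
    have e1 : ∫ u in Ioo 0 Y, h (k+1) u
        = (c ^ (k+1) * (μ * ((k:ℝ)+1)) / Real.Gamma (μ * ((k:ℝ)+1) + 1))
          * ∫ u in Ioo 0 Y, u ^ (μ * ((k:ℝ)+1) - 1) * (Y - u) ^ (-μ) := by
      rw [← MeasureTheory.integral_const_mul]
      refine setIntegral_congr_fun measurableSet_Ioo fun u hu => ?_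
      simp only [hh_def]
      push_cast
      ring
    rw [e1, hkey c k]
  have h_norm_val' : ∀ k : ℕ, ∫ u in Ioo 0 Y, ‖h (k+1) u‖
      = Real.Gamma (1 - μ) * |c| * (|c| ^ k * Y ^ (μ * k) / Real.Gamma (μ * k + 1)) := by
    intro k
    rw [h_norm_val (k+1), show ((k+1 : ℕ) : ℝ) = (k:ℝ) + 1 by push_cast; ring,
      hkey |c| k]
  have h_norm_summable : Summable (fun k : ℕ => ∫ u in Ioo 0 Y, ‖h k u‖) := by
    rw [← summable_nat_add_iff 1]
    refine ((hml_shift |c| (abs_nonneg c)).mul_left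
      (Real.Gamma (1 - μ) * |c|)).congr fun k => ?_
    exact (h_norm_val' k).symm
  have h_summable_int : Summable (fun k : ℕ => ∫ u in Ioo 0 Y, h k u) :=
    Summable.of_norm_bounded h_norm_summable fun k => norm_integral_le_integral_norm _
  have h_tsum_int : ∑' k : ℕ, ∫ u in Ioo 0 Y, h k u
      = Real.Gamma (1 - μ) * c * mittagLeffler μ (c * Y ^ μ) := by
    rw [Summable.tsum_eq_zero_add h_summable_int]
    have h0 : ∫ u in Ioo 0 Y, h 0 u = 0 := by
      have hz : h 0 = fun _ => 0 := by funext u; simp [hh_def]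
      rw [hz, integral_zero]
    rw [h0, zero_add]
    calc ∑' k : ℕ, ∫ u in Ioo 0 Y, h (k+1) u
        = ∑' k : ℕ, Real.Gamma (1-μ) * c
            * (c ^ k * Y ^ (μ * k) / Real.Gamma (μ * k + 1)) := tsum_congr h_int_val
      _ = Real.Gamma (1-μ) * c
            * ∑' k : ℕ, c ^ k * Y ^ (μ * k) / Real.Gamma (μ * k + 1) := tsum_mul_left
      _ = _ := by rw [GompertzAux.ml_eq hY.le]
  -- change of variables
  have himg : (fun τ : ℝ => 1 - Real.exp (-β * τ)) '' Ioo 0 t = Ioo 0 Y := by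
    rw [GompertzAux.y_image hβ ht, ← hY_def]
  have hsub := integral_image_eq_integral_abs_deriv_smul (s := Ioo 0 t) (f' := fun τ : ℝ => β * Real.exp (-β * τ))
    measurableSet_Ioo (fun τ _ => (hyD τ).hasDerivWithinAt)
    ((GompertzAux.y_strictMono hβ).injective.injOn)
    (fun u => ((Y - u) / β) ^ (-μ) * (N₀ * ∑' k : ℕ,
      c ^ k * (μ * k) * u ^ (μ * k - 1) / Real.Gamma (μ * k + 1)))
  rw [himg] at hsub
  have step1 : ∫ τ in Ioo 0 t,
      ((Real.exp (-β * τ) - Real.exp (-β * t)) / β) ^ (-μ) * deriv N τ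
      = ∫ u in Ioo 0 Y, ((Y - u) / β) ^ (-μ) * (N₀ * ∑' k : ℕ,
          c ^ k * (μ * k) * u ^ (μ * k - 1) / Real.Gamma (μ * k + 1)) := by
    rw [hsub]
    refine setIntegral_congr_fun measurableSet_Ioo fun τ hτ => ?_
    have hd := (hND hτ.1).deriv
    rw [hd]
    have habs : |β * Real.exp (-β * τ)| = β * Real.exp (-β * τ) := abs_of_pos (by positivity)
    simp only [smul_eq_mul, habs]
    rw [show Real.exp (-β * τ) - Real.exp (-β * t) = Y - (1 - Real.exp (-β * τ)) by
      rw [hY_def]; ring]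
    ring
  have step3 : ∫ u in Ioo 0 Y, ((Y - u) / β) ^ (-μ) * (N₀ * ∑' k : ℕ,
        c ^ k * (μ * k) * u ^ (μ * k - 1) / Real.Gamma (μ * k + 1))
      = (β ^ μ * N₀) * ∫ u in Ioo 0 Y, ∑' k : ℕ, h k u := by
    rw [← MeasureTheory.integral_const_mul]
    refine setIntegral_congr_fun measurableSet_Ioo fun u hu => ?_
    have hu0 : 0 < u := hu.1
    have hYu : 0 < Y - u := by linarith [hu.2]
    have hdiv : ((Y - u) / β) ^ (-μ) = β ^ μ * (Y - u) ^ (-μ) := by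
      rw [Real.div_rpow hYu.le hβ.le, Real.rpow_neg hβ.le]
      field_simp
    have hsum : (Y - u) ^ (-μ) * (∑' k : ℕ,
        c ^ k * (μ * k) * u ^ (μ * k - 1) / Real.Gamma (μ * k + 1)) = ∑' k : ℕ, h k u := by
      rw [← tsum_mul_left]
      exact tsum_congr fun k => by simp only [hh_def]; ring
    calc ((Y - u) / β) ^ (-μ) * (N₀ * ∑' k : ℕ,
          c ^ k * (μ * k) * u ^ (μ * k - 1) / Real.Gamma (μ * k + 1))
        = (β ^ μ * N₀) * ((Y - u) ^ (-μ) * ∑' k : ℕ,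
            c ^ k * (μ * k) * u ^ (μ * k - 1) / Real.Gamma (μ * k + 1)) := by
          rw [hdiv]; ring
      _ = (β ^ μ * N₀) * ∑' k : ℕ, h k u := by rw [hsum]
  have step4 : ∫ u in Ioo 0 Y, ∑' k : ℕ, h k u = ∑' k : ℕ, ∫ u in Ioo 0 Y, h k u :=
    (integral_tsum_of_summable_integral_norm h_int h_norm_summable).symm
  rw [step1, step3, step4, h_tsum_int, hN t, ← hY_def]
  have hca : β ^ μ * c = α := by
    rw [hc_def]
    field_simp
  field_simp
  linear_combination mittagLeffler μ (c * Y ^ μ) * hca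
end

section
/- Let μ ∈ (0, 1), α ∈ ℝ and β > 0, and define y(t) = (α/β)·(1 − E_μ(−β·t^μ)) for t ≥ 0. Then y(0) = 0, y is differentiable on (0, ∞), and for every t > 0 it satisfies the fractional relaxation equation (1/Γ(1−μ))·∫_0^t (t − τ)^{−μ}·y'(τ) dτ = α − β·y(t). Consequently V_μ(t) = V₀·exp(y(t)) is the solution of the fractional Gompertz model of Bolton et al. with V_μ(0) = V₀. -/
open MeasureTheory

open Real Filter intervalIntegral

lemma gamma_lower {μ x : ℝ} (hμ : 0 < μ) (hμ1 : μ < 1) (hx : 1 - μ < x) :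
    Real.Gamma x * (x + μ - 1) ^ μ ≤ Real.Gamma (x + μ) := by
  have h1 : 0 < x + μ - 1 := by linarith
  have h2 : 0 < x + μ := by linarith
  have key := Real.Gamma_mul_add_mul_le_rpow_Gamma_mul_rpow_Gamma
    (s := x + μ) (t := x + μ - 1) (a := 1 - μ) (b := μ) h2 h1 (by linarith) hμ (by ring)
  have hs : (1 - μ) * (x + μ) + μ * (x + μ - 1) = x := by ring
  rw [hs] at key
  have hG : Real.Gamma (x + μ) = (x + μ - 1) * Real.Gamma (x + μ - 1) := by
    have := Real.Gamma_add_one h1.ne'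
    rwa [sub_add_cancel] at this
  have hGpos : 0 < Real.Gamma (x + μ) := Real.Gamma_pos_of_pos h2
  have hGpos' : 0 < Real.Gamma (x + μ - 1) := Real.Gamma_pos_of_pos h1
  have hkey2 : Real.Gamma (x + μ - 1) = Real.Gamma (x + μ) / (x + μ - 1) := by
    rw [hG]; field_simp
  rw [hkey2, div_rpow hGpos.le h1.le] at key
  calc Real.Gamma x * (x + μ - 1) ^ μ
      ≤ (Real.Gamma (x + μ) ^ (1 - μ) * (Real.Gamma (x + μ) ^ μ / (x + μ - 1) ^ μ)) *
        (x + μ - 1) ^ μ := by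
        apply mul_le_mul_of_nonneg_right key (rpow_nonneg h1.le μ)
    _ = Real.Gamma (x + μ) ^ (1 - μ) * Real.Gamma (x + μ) ^ μ := by
        field_simp
    _ = Real.Gamma (x + μ) := by
        rw [← Real.rpow_add hGpos]; norm_num

lemma summable_gamma {μ : ℝ} (hμ : 0 < μ) (hμ1 : μ < 1) {c : ℝ} (hc : 0 < c) (r : ℝ) :
    Summable (fun k : ℕ => r ^ k / Real.Gamma (μ * k + c)) := by
  apply summable_of_ratio_norm_eventually_le (r := 1/2) (by norm_num)
  have base : Tendsto (fun k : ℕ => μ * (k : ℝ)) atTop atTop :=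
    (tendsto_natCast_atTop_atTop (R := ℝ)).const_mul_atTop hμ
  have ht1 : Tendsto (fun k : ℕ => μ * k + c) atTop atTop :=
    tendsto_atTop_add_const_right _ c base
  have ht2 : Tendsto (fun k : ℕ => (μ * k + c + μ - 1) ^ μ) atTop atTop := by
    apply (tendsto_rpow_atTop hμ).comp
    exact (tendsto_atTop_add_const_right _ (c + μ - 1) base).congr (fun k => by ring)
  filter_upwards [ht1.eventually_gt_atTop (1 - μ), ht2.eventually_ge_atTop (2 * |r| + 1)]
    with k hk1 hk2
  set x := μ * (k : ℝ) + c with hxdef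
  have hx0 : 0 < x := by positivity
  have hx1 : 0 < x + μ := by positivity
  have hGx : 0 < Real.Gamma x := Real.Gamma_pos_of_pos hx0
  have hGxm : 0 < Real.Gamma (x + μ) := Real.Gamma_pos_of_pos hx1
  have hlow : Real.Gamma x * (2 * |r| + 1) ≤ Real.Gamma (x + μ) := by
    calc Real.Gamma x * (2 * |r| + 1) ≤ Real.Gamma x * (x + μ - 1) ^ μ := by
          apply mul_le_mul_of_nonneg_left hk2 hGx.le
      _ ≤ Real.Gamma (x + μ) := gamma_lower hμ hμ1 hk1
  have hcast : μ * ((k : ℕ) + 1 : ℕ) + c = x + μ := by push_cast; ring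
  rw [norm_div, norm_div, norm_pow, norm_pow, hcast]
  rw [Real.norm_of_nonneg hGx.le, Real.norm_of_nonneg hGxm.le]
  calc ‖r‖ ^ (k + 1) / Real.Gamma (x + μ)
      ≤ ‖r‖ ^ (k + 1) / (Real.Gamma x * (2 * |r| + 1)) := by
        apply div_le_div_of_nonneg_left (by positivity) (by positivity) hlow
    _ = (‖r‖ / (2 * |r| + 1)) * (‖r‖ ^ k / Real.Gamma x) := by
        rw [pow_succ]; field_simp
    _ ≤ (1/2) * (‖r‖ ^ k / Real.Gamma x) := by
        apply mul_le_mul_of_nonneg_right ?_ (by positivity)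
        rw [div_le_div_iff₀ (by positivity) (by norm_num), Real.norm_eq_abs]
        linarith [abs_nonneg r]
    _ = 1 / 2 * (‖r‖ ^ k / Real.Gamma x) := by norm_num

lemma summable_gamma' {μ : ℝ} (hμ : 0 < μ) (hμ1 : μ < 1) {c : ℝ} (hc : 0 < c) (r : ℝ) :
    Summable (fun k : ℕ => (k : ℝ) * r ^ k / Real.Gamma (μ * k + c)) := by
  apply Summable.of_norm_bounded (summable_gamma hμ hμ1 hc (2 * |r|))
  intro k
  have hG : 0 < Real.Gamma (μ * k + c) := Real.Gamma_pos_of_pos (by positivity)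
  rw [norm_div, Real.norm_of_nonneg hG.le, norm_mul, norm_pow]
  rw [Real.norm_natCast, Real.norm_eq_abs]
  gcongr
  calc (k : ℝ) * |r| ^ k ≤ 2 ^ k * |r| ^ k := by
        apply mul_le_mul_of_nonneg_right ?_ (by positivity)
        exact_mod_cast (Nat.lt_two_pow_self (n := k)).le
    _ = (2 * |r|) ^ k := (mul_pow 2 |r| k).symm

noncomputable def mlTerm (μ β : ℝ) (n : ℕ) (s : ℝ) : ℝ :=
  (-β) ^ n / Real.Gamma (μ * n + 1) * s ^ (μ * n)

noncomputable def mlDTerm (μ β : ℝ) (n : ℕ) (s : ℝ) : ℝ :=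
  (-β) ^ n / Real.Gamma (μ * n + 1) * (μ * n * s ^ (μ * n - 1))

lemma mlTerm_eq {μ β s : ℝ} (hs : 0 ≤ s) :
    mittagLeffler μ (-β * s ^ μ) = ∑' n, mlTerm μ β n s := by
  unfold mittagLeffler mlTerm
  congr 1; funext n
  rw [mul_pow, ← Real.rpow_natCast (s ^ μ) n, ← Real.rpow_mul hs]
  ring

lemma mlTerm_eq' {μ β s : ℝ} (hs : 0 ≤ s) (n : ℕ) :
    mlTerm μ β n s = (-β * s ^ μ) ^ n / Real.Gamma (μ * n + 1) := by
  unfold mlTerm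
  rw [mul_pow, ← Real.rpow_natCast (s ^ μ) n, ← Real.rpow_mul hs]
  ring

lemma summable_mlTerm {μ β s : ℝ} (hμ : 0 < μ) (hμ1 : μ < 1) (hs : 0 ≤ s) :
    Summable (fun n => mlTerm μ β n s) := by
  apply (summable_gamma hμ hμ1 one_pos (-β * s ^ μ)).congr
  intro n; rw [mlTerm_eq' hs]

lemma hasDerivAt_mlTerm (μ β : ℝ) (n : ℕ) {s : ℝ} (hs : 0 < s) :
    HasDerivAt (mlTerm μ β n) (mlDTerm μ β n s) s := by
  have h := Real.hasDerivAt_rpow_const (x := s) (p := μ * n) (Or.inl hs.ne')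
  exact h.const_mul _

lemma hasDerivAt_ML {μ β t : ℝ} (hμ : 0 < μ) (hμ1 : μ < 1) (hβ : 0 < β) (ht : 0 < t) :
    HasDerivAt (fun s => mittagLeffler μ (-β * s ^ μ)) (∑' n, mlDTerm μ β n t) t := by
  have hsub : t ∈ Set.Ioo (t/2) (2*t) := by constructor <;> [linarith; linarith]
  have hb : (0:ℝ) < 2 * t := by linarith
  have key : HasDerivAt (fun s => ∑' n, mlTerm μ β n s) (∑' n, mlDTerm μ β n t) t := by
    apply hasDerivAt_tsum_of_isPreconnected
      (u := fun n : ℕ => (2/t) * μ * ((n : ℝ) * (β * (2*t) ^ μ) ^ n / Real.Gamma (μ * n + 1)))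
      ?_ isOpen_Ioo isPreconnected_Ioo
      (fun n x hx => hasDerivAt_mlTerm μ β n (by linarith [hx.1] : (0:ℝ) < x))
      ?_ hsub (summable_mlTerm hμ hμ1 (by linarith : (0:ℝ) ≤ t)) hsub
    · exact ((summable_gamma' hμ hμ1 one_pos (β * (2*t) ^ μ)).mul_left _)
    · intro n x hx
      obtain ⟨hx1, hx2⟩ := hx
      have hx0 : 0 < x := by linarith
      have hG : 0 < Real.Gamma (μ * n + 1) := Real.Gamma_pos_of_pos (by positivity)
      have hxp : x ^ (μ * n - 1) = x ^ (μ * n) / x := by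
        rw [Real.rpow_sub hx0, Real.rpow_one]
      have hb1 : x ^ (μ * n) ≤ (2*t) ^ (μ * n) :=
        Real.rpow_le_rpow hx0.le hx2.le (by positivity)
      have hb2 : (2*t) ^ (μ * (n:ℝ)) = ((2*t) ^ μ) ^ n := by
        rw [Real.rpow_mul hb.le, Real.rpow_natCast]
      rw [mlDTerm]
      rw [Real.norm_eq_abs, abs_mul, abs_div, abs_pow, abs_neg, abs_of_pos hβ,
        abs_of_pos hG, abs_mul, abs_mul]
      rw [abs_of_nonneg (by positivity : (0:ℝ) ≤ μ), abs_of_nonneg (by positivity : (0:ℝ) ≤ (n:ℝ)),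
        abs_of_nonneg (Real.rpow_nonneg hx0.le _)]
      rw [hxp]
      calc β ^ n / Real.Gamma (μ * n + 1) * (μ * n * (x ^ (μ * n) / x))
          ≤ β ^ n / Real.Gamma (μ * n + 1) * (μ * n * ((2*t) ^ (μ * n) / (t/2))) := by
            apply mul_le_mul_of_nonneg_left ?_ (by positivity)
            apply mul_le_mul_of_nonneg_left ?_ (by positivity)
            apply div_le_div₀ (by positivity) hb1 (by linarith) hx1.le
        _ = (2/t) * μ * ((n : ℝ) * (β * (2*t) ^ μ) ^ n / Real.Gamma (μ * n + 1)) := by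
            rw [mul_pow, ← hb2]
            field_simp
  apply key.congr_of_eventuallyEq
  filter_upwards [Ioo_mem_nhds hsub.1 hsub.2] with s hs
  exact mlTerm_eq (by linarith [hs.1] : (0:ℝ) ≤ s)

lemma beta_integrable {a b t : ℝ} (ha : -1 < a) (hb : -1 < b) (ht : 0 < t) :
    IntegrableOn (fun τ => τ ^ a * (t - τ) ^ b) (Set.Ioo 0 t) := by
  have h1 : IntervalIntegrable (fun τ : ℝ => τ ^ a * (t - τ) ^ b) volume 0 (t/2) := by
    apply (intervalIntegrable_rpow' ha).mul_continuousOn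
    intro x hx
    rw [Set.uIcc_of_le (by linarith)] at hx
    apply ContinuousAt.continuousWithinAt
    apply ContinuousAt.rpow_const (by fun_prop)
    left
    have : x ≤ t/2 := hx.2
    intro h; rw [sub_eq_zero] at h; linarith
  have h2 : IntervalIntegrable (fun τ : ℝ => τ ^ a * (t - τ) ^ b) volume (t/2) t := by
    have hbase : IntervalIntegrable (fun x : ℝ => x ^ b) volume 0 (t/2) :=
      intervalIntegrable_rpow' hb
    have hcomp := hbase.comp_sub_left t
    rw [sub_zero] at hcomp
    have e : t - t / 2 = t / 2 := by ring
    rw [e] at hcomp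
    have hcomp2 := hcomp.symm
    apply hcomp2.continuousOn_mul
    intro x hx
    rw [Set.uIcc_of_le (by linarith)] at hx
    apply ContinuousAt.continuousWithinAt
    apply ContinuousAt.rpow_const (by fun_prop)
    left
    have := hx.1
    intro h; rw [h] at this; linarith
  have := (h1.trans h2).1
  exact this.mono_set Set.Ioo_subset_Ioc_self

lemma beta_value {a b t : ℝ} (ha : -1 < a) (hb : -1 < b) (ht : 0 < t) :
    ∫ τ in Set.Ioo 0 t, τ ^ a * (t - τ) ^ b =
      Real.Gamma (a+1) * Real.Gamma (b+1) / Real.Gamma (a+b+2) * t ^ (a+b+1) := by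
  have hp : (0:ℝ) < a + 1 := by linarith
  have hq : (0:ℝ) < b + 1 := by linarith
  have hC := Complex.betaIntegral_scaled (a+1 : ℝ) (b+1 : ℝ) ht
  have hB := Complex.Gamma_mul_Gamma_eq_betaIntegral
    (s := ((a+1 : ℝ) : ℂ)) (t := ((b+1 : ℝ) : ℂ)) (by simpa using hp) (by simpa using hq)
  have hGne : Complex.Gamma (((a+1:ℝ):ℂ) + ((b+1:ℝ):ℂ)) ≠ 0 := by
    apply Complex.Gamma_ne_zero_of_re_pos
    simp only [Complex.add_re, Complex.ofReal_re]
    linarith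
  have hbeta : Complex.betaIntegral ((a+1:ℝ):ℂ) ((b+1:ℝ):ℂ) =
      Complex.Gamma ((a+1:ℝ):ℂ) * Complex.Gamma ((b+1:ℝ):ℂ) /
        Complex.Gamma (((a+1:ℝ):ℂ) + ((b+1:ℝ):ℂ)) := by
    rw [hB, mul_div_cancel_left₀ _ hGne]
  -- rewrite the complex interval integral as ofReal of the real one
  have hcongr : ∫ x in (0:ℝ)..t, (x:ℂ) ^ (((a+1:ℝ):ℂ) - 1) * ((t:ℂ) - x) ^ (((b+1:ℝ):ℂ) - 1) =
      ∫ x in (0:ℝ)..t, ((x ^ a * (t - x) ^ b : ℝ) : ℂ) := by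
    apply intervalIntegral.integral_congr
    intro x hx
    rw [Set.uIcc_of_le ht.le] at hx
    dsimp only
    have hx0 : 0 ≤ x := hx.1
    have hx1 : 0 ≤ t - x := by linarith [hx.2]
    have e1 : ((a+1:ℝ):ℂ) - 1 = ((a:ℝ):ℂ) := by push_cast; ring
    have e2 : ((b+1:ℝ):ℂ) - 1 = ((b:ℝ):ℂ) := by push_cast; ring
    rw [e1, e2, ← Complex.ofReal_cpow hx0, ← Complex.ofReal_sub, ← Complex.ofReal_cpow hx1]
    push_cast
    ring
  rw [hcongr, intervalIntegral.integral_ofReal, hbeta] at hC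
  have hrhs : ((t:ℂ)) ^ (((a+1:ℝ):ℂ) + ((b+1:ℝ):ℂ) - 1) = (((t ^ (a+b+1) : ℝ)) : ℂ) := by
    have e : ((a+1:ℝ):ℂ) + ((b+1:ℝ):ℂ) - 1 = ((a+b+1:ℝ):ℂ) := by push_cast; ring
    rw [e, ← Complex.ofReal_cpow ht.le]
  rw [hrhs] at hC
  rw [Complex.Gamma_ofReal, Complex.Gamma_ofReal, ← Complex.ofReal_add, Complex.Gamma_ofReal] at hC
  have e3 : (a:ℝ) + 1 + (b + 1) = a + b + 2 := by ring
  rw [e3] at hC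
  rw [← Complex.ofReal_mul, ← Complex.ofReal_div, ← Complex.ofReal_mul] at hC
  have hreal := Complex.ofReal_inj.mp hC
  rw [intervalIntegral.integral_of_le ht.le, MeasureTheory.integral_Ioc_eq_integral_Ioo] at hreal
  rw [hreal]
  ring

noncomputable def Kc (μ α β : ℝ) (n : ℕ) : ℝ :=
  -(α/β) * ((-β) ^ n / Real.Gamma (μ * n + 1)) * (μ * n)

noncomputable def Gf (μ α β t : ℝ) (n : ℕ) (τ : ℝ) : ℝ :=
  Kc μ α β n * (τ ^ (μ * n - 1) * (t - τ) ^ (-μ))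

lemma integral_eq {μ β t : ℝ} (hμ : 0 < μ) (hμ1 : μ < 1) (hβ : 0 < β) (ht : 0 < t) (α : ℝ) :
    ∫ τ in Set.Ioo 0 t, (t - τ) ^ (-μ) * (-(α/β) * ∑' n, mlDTerm μ β n τ) =
      Real.Gamma (1-μ) * (α * mittagLeffler μ (-β * t ^ μ)) := by
  have hb1 : (-1 : ℝ) < -μ := by linarith
  have hGpos : ∀ x : ℝ, 0 < x → 0 < Real.Gamma x := fun x hx => Real.Gamma_pos_of_pos hx
  -- integrability of each term
  have hint : ∀ n : ℕ, IntegrableOn (Gf μ α β t n) (Set.Ioo 0 t) := by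
    intro n
    match n with
    | 0 =>
      have h0 : Gf μ α β t 0 = fun _ => 0 := by
        funext τ; simp [Gf, Kc]
      rw [h0]; exact integrableOn_zero
    | m + 1 =>
      have ha : (-1 : ℝ) < μ * ((m+1 : ℕ) : ℝ) - 1 := by
        have : (0:ℝ) < μ * ((m+1 : ℕ) : ℝ) := by positivity
        linarith
      exact (beta_integrable ha hb1 ht).const_mul _
  -- value of each term, n = m+1
  have hc : ∀ m : ℕ, (0:ℝ) < μ * ((m:ℝ)+1) := by
    intro m; positivity
  have hcast : ∀ m : ℕ, (((m+1 : ℕ) : ℝ)) = (m:ℝ)+1 := by intro m; push_cast; ring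
  have hbv : ∀ m : ℕ, ∫ τ in Set.Ioo 0 t, τ ^ (μ * ((m+1:ℕ):ℝ) - 1) * (t - τ) ^ (-μ) =
      Real.Gamma (μ * ((m:ℝ)+1)) * Real.Gamma (1-μ) / Real.Gamma (μ * m + 1) *
        t ^ (μ * ((m:ℝ)+1) - μ) := by
    intro m
    have ha : (-1 : ℝ) < μ * ((m+1 : ℕ) : ℝ) - 1 := by
      have := hc m; rw [← hcast m] at this; linarith
    rw [beta_value ha hb1 ht, hcast m]
    rw [show μ * ((m:ℝ)+1) - 1 + 1 = μ * ((m:ℝ)+1) from by ring,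
      show (-μ) + 1 = 1 - μ from by ring,
      show μ * ((m:ℝ)+1) - 1 + -μ + 2 = μ * m + 1 from by ring,
      show μ * ((m:ℝ)+1) - 1 + -μ + 1 = μ * ((m:ℝ)+1) - μ from by ring]
  have hGamma_succ : ∀ m : ℕ, Real.Gamma (μ * ((m:ℝ)+1) + 1) =
      μ * ((m:ℝ)+1) * Real.Gamma (μ * ((m:ℝ)+1)) := fun m => Real.Gamma_add_one (hc m).ne'
  have htpow : ∀ m : ℕ, t ^ (μ * ((m:ℝ)+1) - μ) = (t ^ μ) ^ m := by
    intro m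
    rw [show μ * ((m:ℝ)+1) - μ = μ * m from by ring, Real.rpow_mul ht.le,
      Real.rpow_natCast]
  -- signed values
  have hval : ∀ m : ℕ, ∫ τ in Set.Ioo 0 t, Gf μ α β t (m+1) τ =
      Real.Gamma (1-μ) * (α * ((-β * t ^ μ) ^ m / Real.Gamma (μ * m + 1))) := by
    intro m
    rw [show (fun τ => Gf μ α β t (m+1) τ) = fun τ =>
      Kc μ α β (m+1) * (τ ^ (μ * ((m+1:ℕ):ℝ) - 1) * (t - τ) ^ (-μ)) from rfl]
    rw [MeasureTheory.integral_const_mul, hbv m]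
    rw [Kc, hcast m, hGamma_succ m, htpow m, mul_pow]
    have h1 := (hGpos _ (hc m)).ne'
    have h3 := (hGpos (μ * m + 1) (by positivity)).ne'
    field_simp
    ring
  -- zero term
  have h00 : Gf μ α β t 0 = fun _ => 0 := by funext τ; simp [Gf, Kc]
  have hval0 : ∫ τ in Set.Ioo 0 t, Gf μ α β t 0 τ = 0 := by rw [h00]; simp
  -- norm values
  have hnormptw : ∀ n : ℕ, Set.EqOn (fun τ => ‖Gf μ α β t n τ‖)
      (fun τ => |Kc μ α β n| * (τ ^ (μ * n - 1) * (t - τ) ^ (-μ))) (Set.Ioo 0 t) := by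
    intro n τ hτ
    dsimp only
    rw [Gf, Real.norm_eq_abs, abs_mul]
    congr 1
    exact abs_of_nonneg (mul_nonneg (Real.rpow_nonneg hτ.1.le _)
      (Real.rpow_nonneg (by linarith [hτ.2] : (0:ℝ) ≤ t - τ) _))
  have hnormint : ∀ m : ℕ, ∫ τ in Set.Ioo 0 t, ‖Gf μ α β t (m+1) τ‖ =
      (|α| * Real.Gamma (1-μ)) * ((β * t ^ μ) ^ m / Real.Gamma (μ * m + 1)) := by
    intro m
    rw [MeasureTheory.setIntegral_congr_fun measurableSet_Ioo (hnormptw (m+1))]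
    rw [MeasureTheory.integral_const_mul, hbv m]
    have habs : |Kc μ α β (m+1)| =
        |α|/β * (β^(m+1) / Real.Gamma (μ*((m:ℝ)+1)+1)) * (μ*((m:ℝ)+1)) := by
      rw [Kc, hcast m, abs_mul, abs_mul, abs_neg, abs_div, abs_of_pos hβ, abs_div,
        abs_pow, abs_neg, abs_of_pos hβ, abs_of_pos (hGpos _ (by positivity)),
        abs_of_nonneg (hc m).le]
    rw [habs, hGamma_succ m, htpow m, mul_pow]
    have h1 := (hGpos _ (hc m)).ne'
    have h3 := (hGpos (μ * m + 1) (by positivity)).ne'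
    field_simp
    ring
  have hsummnorm : Summable (fun n => ∫ τ in Set.Ioo 0 t, ‖Gf μ α β t n τ‖) := by
    rw [← summable_nat_add_iff 1]
    apply ((summable_gamma hμ hμ1 one_pos (β * t ^ μ)).mul_left
      (|α| * Real.Gamma (1-μ))).congr
    intro m
    exact (hnormint m).symm
  have hswap := MeasureTheory.integral_tsum_of_summable_integral_norm
    (μ := volume.restrict (Set.Ioo 0 t)) (F := Gf μ α β t) hint hsummnorm
  have hsum : Summable (fun n => ∫ τ in Set.Ioo 0 t, Gf μ α β t n τ) :=
    Summable.of_norm_bounded hsummnorm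
      (fun n => MeasureTheory.norm_integral_le_integral_norm _)
  calc ∫ τ in Set.Ioo 0 t, (t - τ) ^ (-μ) * (-(α/β) * ∑' n, mlDTerm μ β n τ)
      = ∫ τ in Set.Ioo 0 t, ∑' n, Gf μ α β t n τ := by
        apply MeasureTheory.setIntegral_congr_fun measurableSet_Ioo
        intro τ hτ
        dsimp only
        rw [show (t - τ)^(-μ) * (-(α/β) * ∑' n, mlDTerm μ β n τ) =
          ((t-τ)^(-μ) * -(α/β)) * ∑' n, mlDTerm μ β n τ from by ring, ← tsum_mul_left]
        exact tsum_congr fun n => by rw [mlDTerm, Gf, Kc]; ring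
    _ = ∑' n, ∫ τ in Set.Ioo 0 t, Gf μ α β t n τ := hswap.symm
    _ = (∫ τ in Set.Ioo 0 t, Gf μ α β t 0 τ) +
        ∑' m, ∫ τ in Set.Ioo 0 t, Gf μ α β t (m+1) τ := Summable.tsum_eq_zero_add hsum
    _ = ∑' m : ℕ, Real.Gamma (1-μ) * (α * ((-β * t ^ μ) ^ m / Real.Gamma (μ * m + 1))) := by
        rw [hval0, zero_add]
        exact tsum_congr fun m => hval m
    _ = Real.Gamma (1-μ) * (α * mittagLeffler μ (-β * t ^ μ)) := by
        rw [tsum_mul_left, tsum_mul_left, mittagLeffler]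


/-- **The Bolton et al. fractional Gompertz law solves the fractional relaxation
equation.** Let `μ ∈ (0, 1)`, `α ∈ ℝ`, `β > 0`, and define
`y(t) = (α/β)·(1 − E_μ(−β·t^μ))`. Then `y 0 = 0`, `y` is differentiable on `(0, ∞)`,
and for every `t > 0` it satisfies
`(1/Γ(1−μ))·∫_0^t (t − τ)^(−μ)·y'(τ) dτ = α − β·y(t)`.
Consequently `V_μ(t) = V₀·exp(y t)` solves the fractional Gompertz model of Bolton
et al. with `V_μ(0) = V₀`. -/
theorem bolton_fractional_gompertz_relaxation
    (μ α β V₀ : ℝ) (hμ : 0 < μ) (hμ1 : μ < 1) (hβ : 0 < β) (hV₀ : 0 < V₀)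
    (y : ℝ → ℝ)
    (hy : ∀ t : ℝ, y t = (α / β) * (1 - mittagLeffler μ (-β * t ^ μ))) :
    y 0 = 0 ∧
    (∀ t > (0 : ℝ), DifferentiableAt ℝ y t) ∧
    (∀ t > (0 : ℝ),
      (1 / Real.Gamma (1 - μ)) *
          ∫ τ in Set.Ioo (0 : ℝ) t, (t - τ) ^ (-μ) * deriv y τ
        = α - β * y t) ∧
    V₀ * Real.exp (y 0) = V₀ := by
  have hML0 : mittagLeffler μ (-β * (0:ℝ) ^ μ) = 1 := by
    rw [Real.zero_rpow hμ.ne', mul_zero]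
    unfold mittagLeffler
    rw [tsum_eq_single 0 ?_]
    · norm_num [Real.Gamma_one]
    · intro b hb; simp [zero_pow hb]
  have hy0 : y 0 = 0 := by rw [hy 0, hML0]; ring
  have hderiv : ∀ τ : ℝ, 0 < τ → HasDerivAt y (-(α/β) * ∑' n, mlDTerm μ β n τ) τ := by
    intro τ hτ
    have h1 := HasDerivAt.const_mul (α/β) (hasDerivAt_ML hμ hμ1 hβ hτ)
    have h2 := h1.const_sub (α/β)
    have hfun : y = fun s => α/β - α/β * mittagLeffler μ (-β * s ^ μ) := by
      funext s; rw [hy s]; ring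
    rw [hfun]
    exact h2.congr_deriv (by ring)
  refine ⟨hy0, fun t ht => (hderiv t ht).differentiableAt, fun t ht => ?_, by rw [hy0]; simp⟩
  have hcongr : ∫ τ in Set.Ioo (0:ℝ) t, (t - τ) ^ (-μ) * deriv y τ =
      ∫ τ in Set.Ioo 0 t, (t - τ) ^ (-μ) * (-(α/β) * ∑' n, mlDTerm μ β n τ) := by
    apply MeasureTheory.setIntegral_congr_fun measurableSet_Ioo
    intro τ hτ
    dsimp only
    rw [(hderiv τ hτ.1).deriv]
  rw [hcongr, integral_eq hμ hμ1 hβ ht α]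
  have hGne : Real.Gamma (1 - μ) ≠ 0 := (Real.Gamma_pos_of_pos (by linarith)).ne'
  rw [hy t]
  field_simp
  ring
end
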